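/- Let A be densely defined on H and 𝔄 the block operator on H ⊕ H with domain D(CAC) ⊕ D(A) given by 𝔄(x,y) = (Ay, CACx). Then A is C-symmetric if and only if 𝔄 is symmetric, and A is C-self-adjoint if and only if 𝔄 is self-adjoint. Moreover 𝔄* has domain D(A*) ⊕ D(CA*C) and 𝔄*(x,y) = (CA*Cy, A*x). -/

import Mathlib

open scoped InnerProductSpace
open LinearPMap

variable {H : Type*} [NormedAddCommGroup H] [InnerProductSpace ℂ H]

/-- A conjugation on a complex inner product space: a conjugate-linear involution
satisfying `⟪Cx, Cy⟫ = ⟪y, x⟫`. -/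
structure Conjugation (H : Type*) [NormedAddCommGroup H] [InnerProductSpace ℂ H] where
  toFun : H → H
  map_add' : ∀ x y, toFun (x + y) = toFun x + toFun y
  map_smulc : ∀ (c : ℂ) (x : H), toFun (c • x) = (starRingEnd ℂ c) • toFun x
  invol : ∀ x, toFun (toFun x) = x
  inner_conj : ∀ x y, ⟪toFun x, toFun y⟫_ℂ = ⟪y, x⟫_ℂ

namespace Conjugation

instance : CoeFun (Conjugation H) fun _ => H → H := ⟨toFun⟩

lemma map_zero (C : Conjugation H) : C 0 = 0 := by
  have := C.map_smulc 0 0; simpa using this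

lemma mem_of_mem_image (C : Conjugation H) {S : Set H} {x : H} (hx : x ∈ C.toFun '' S) :
    C x ∈ S := by
  obtain ⟨t, ht, rfl⟩ := hx
  rwa [C.invol]

/-- The image `C(D)` of a subspace under a conjugation, as a subspace. -/
def conjDomain (C : Conjugation H) (D : Submodule ℂ H) : Submodule ℂ H where
  carrier := C.toFun '' (D : Set H)
  add_mem' := by
    rintro a b ⟨x, hx, rfl⟩ ⟨y, hy, rfl⟩
    exact ⟨x + y, D.add_mem hx hy, (C.map_add' x y).symm ▸ rfl⟩
  zero_mem' := ⟨0, D.zero_mem, C.map_zero⟩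
  smul_mem' := by
    rintro c a ⟨x, hx, rfl⟩
    refine ⟨(starRingEnd ℂ c) • x, D.smul_mem _ hx, ?_⟩
    rw [C.map_smulc]; simp

lemma conj_mem (C : Conjugation H) {D : Submodule ℂ H} {x : H} (hx : x ∈ C.conjDomain D) :
    C x ∈ D := C.mem_of_mem_image hx

/-- The operator `C T C` with domain `C(D(T))`. -/
noncomputable def conjOp (C : Conjugation H) (T : H →ₗ.[ℂ] H) : H →ₗ.[ℂ] H where
  domain := C.conjDomain T.domain
  toFun :=
  { toFun := fun x => C (T ⟨C ↑x, C.conj_mem x.2⟩)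
    map_add' := by
      intro x y
      have h : (⟨C ↑(x + y), C.conj_mem (x + y).2⟩ : T.domain)
          = ⟨C ↑x, C.conj_mem x.2⟩ + ⟨C ↑y, C.conj_mem y.2⟩ := by
        apply Subtype.ext; simp [C.map_add']
      try dsimp only
      rw [h, T.map_add, C.map_add']
    map_smul' := by
      intro c x
      have h : (⟨C ↑(c • x), C.conj_mem (c • x).2⟩ : T.domain)
          = (starRingEnd ℂ c) • (⟨C ↑x, C.conj_mem x.2⟩ : T.domain) := by
        apply Subtype.ext; simp [C.map_smulc]
      try dsimp only
      rw [h, T.map_smul, C.map_smulc]; simp }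

/-- `A` is `C`-symmetric: `CAC ⊆ A*`. -/
noncomputable def IsCSymmetric [CompleteSpace H] (C : Conjugation H) (A : H →ₗ.[ℂ] H) : Prop :=
  C.conjOp A ≤ A†

/-- `A` is `C`-self-adjoint: `CAC = A*`. -/
noncomputable def IsCSelfAdjoint [CompleteSpace H] (C : Conjugation H) (A : H →ₗ.[ℂ] H) : Prop :=
  C.conjOp A = A†

end Conjugation
variable [CompleteSpace H]

open scoped InnerProductSpace in
/-- The kernel `N(I + A*CA*C)`. -/
noncomputable def kerIplusAstarCAstarC (C : Conjugation H) (A : H →ₗ.[ℂ] H) : Set H :=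
  {g | ∃ hg : g ∈ (C.conjOp (A†)).domain, ∃ h2 : (C.conjOp (A†)) ⟨g, hg⟩ ∈ (A†).domain,
      g + A† ⟨(C.conjOp (A†)) ⟨g, hg⟩, h2⟩ = 0}

/-- The kernel `N(I + CA*CA*)`. -/
noncomputable def kerIplusCAstarCAstar (C : Conjugation H) (A : H →ₗ.[ℂ] H) : Set H :=
  {g | ∃ hg : g ∈ (A†).domain, ∃ h2 : A† ⟨g, hg⟩ ∈ (C.conjOp (A†)).domain,
      g + (C.conjOp (A†)) ⟨A† ⟨g, hg⟩, h2⟩ = 0}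

/-- The kernel `N(I + A*B*)` where `B = CAC`. -/
noncomputable def kerIplusAstarBstar (C : Conjugation H) (A : H →ₗ.[ℂ] H) : Set H :=
  {g | ∃ hg : g ∈ ((C.conjOp A)†).domain, ∃ h2 : (C.conjOp A)† ⟨g, hg⟩ ∈ (A†).domain,
      g + A† ⟨(C.conjOp A)† ⟨g, hg⟩, h2⟩ = 0}

open scoped InnerProductSpace in
/-- The orthogonal complement of `S` within `W`, with respect to the graph inner
product `⟪f, g⟫ + ⟪Tf, Tg⟫` of `T`. -/
def graphOrthComplIn (T : H →ₗ.[ℂ] H) (W S : Set H) : Set H :=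
  {g | g ∈ W ∧ ∃ hg : g ∈ T.domain, ∀ f ∈ S, ∀ hf : f ∈ T.domain,
      ⟪f, g⟫_ℂ + ⟪T ⟨f, hf⟩, T ⟨g, hg⟩⟫_ℂ = 0}

/-- The deficiency space `N(T* - μ)`. -/
noncomputable def defectSpace (T : H →ₗ.[ℂ] H) (μ : ℂ) : Submodule ℂ H where
  carrier := {z | ∃ hz : z ∈ (T†).domain, T† ⟨z, hz⟩ = μ • z}
  add_mem' := by
    rintro a b ⟨ha, hva⟩ ⟨hb, hvb⟩
    refine ⟨(T†).domain.add_mem ha hb, ?_⟩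
    have h : (⟨a + b, (T†).domain.add_mem ha hb⟩ : (T†).domain) = ⟨a, ha⟩ + ⟨b, hb⟩ := rfl
    rw [h, LinearPMap.map_add, hva, hvb, smul_add]
  zero_mem' := by
    refine ⟨(T†).domain.zero_mem, ?_⟩
    have h : (⟨(0 : H), (T†).domain.zero_mem⟩ : (T†).domain) = 0 := rfl
    rw [h, LinearPMap.map_zero, smul_zero]
  smul_mem' := by
    rintro c a ⟨ha, hva⟩
    refine ⟨(T†).domain.smul_mem c ha, ?_⟩
    have h : (⟨c • a, (T†).domain.smul_mem c ha⟩ : (T†).domain) = c • ⟨a, ha⟩ := rfl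
    rw [h, LinearPMap.map_smul, hva, smul_comm]


section Aux

theorem WithLp.equiv_fst {p : ENNReal} {α β : Type*} (x : WithLp p (α × β)) :
    (WithLp.equiv p (α × β) x).fst = x.fst := rfl

theorem WithLp.equiv_snd {p : ENNReal} {α β : Type*} (x : WithLp p (α × β)) :
    (WithLp.equiv p (α × β) x).snd = x.snd := rfl

theorem WithLp.prod_inner_apply_fst_snd {E F : Type*} [NormedAddCommGroup E]
    [InnerProductSpace ℂ E] [NormedAddCommGroup F] [InnerProductSpace ℂ F]
    (x y : WithLp 2 (E × F)) :
    ⟪x, y⟫_ℂ = ⟪x.fst, y.fst⟫_ℂ + ⟪x.snd, y.snd⟫_ℂ := rfl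

namespace Conjugation

variable {H' : Type*} [NormedAddCommGroup H'] [InnerProductSpace ℂ H']

lemma map_neg' (C : Conjugation H') (x : H') : C (-x) = -(C x) := by
  have h := C.map_smulc (-1) x
  simpa using h

lemma map_sub' (C : Conjugation H') (x y : H') : C (x - y) = C x - C y := by
  rw [sub_eq_add_neg, C.map_add', C.map_neg', sub_eq_add_neg]

lemma norm_map' (C : Conjugation H') (x : H') : ‖C x‖ = ‖x‖ := by
  have h : ⟪C x, C x⟫_ℂ = ⟪x, x⟫_ℂ := C.inner_conj x x
  rw [@norm_eq_sqrt_re_inner ℂ, @norm_eq_sqrt_re_inner ℂ, h]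

lemma isometry' (C : Conjugation H') : Isometry C.toFun :=
  Isometry.of_dist_eq fun x y => by
    rw [dist_eq_norm, dist_eq_norm, ← C.map_sub', C.norm_map']

lemma continuous' (C : Conjugation H') : Continuous C.toFun :=
  C.isometry'.continuous

lemma surjective' (C : Conjugation H') : Function.Surjective C.toFun :=
  fun y => ⟨C y, C.invol y⟩

lemma dense_image' (C : Conjugation H') {s : Set H'} (hs : Dense s) :
    Dense (C.toFun '' s) := by
  rw [dense_iff_closure_eq] at hs ⊢
  apply Set.eq_univ_of_univ_subset
  calc (Set.univ : Set H') = C.toFun '' Set.univ :=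
        (Set.image_univ_of_surjective C.surjective').symm
    _ = C.toFun '' closure s := by rw [hs]
    _ ⊆ closure (C.toFun '' s) := image_closure_subset_closure_image C.continuous'

lemma mem_conjDomain_iff' (C : Conjugation H') {D : Submodule ℂ H'} {x : H'} :
    x ∈ C.conjDomain D ↔ C x ∈ D := by
  constructor
  · exact C.conj_mem
  · intro h; exact ⟨C x, h, C.invol x⟩

lemma conjOp_apply' (C : Conjugation H') (T : H' →ₗ.[ℂ] H') (x : (C.conjOp T).domain) :
    C.conjOp T x = C (T ⟨C ↑x, C.conj_mem x.2⟩) := rfl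

lemma inner_conj_left (C : Conjugation H') (x y : H') : ⟪C x, y⟫_ℂ = ⟪C y, x⟫_ℂ := by
  conv_lhs => rw [← C.invol y]
  exact C.inner_conj x (C.toFun y)

lemma inner_conj_right (C : Conjugation H') (x y : H') : ⟪x, C y⟫_ℂ = ⟪y, C x⟫_ℂ := by
  rw [← inner_conj_symm, C.inner_conj_left, inner_conj_symm]

end Conjugation

end Aux

theorem stmt_14 (C : Conjugation H) (A : H →ₗ.[ℂ] H) (hA : Dense (A.domain : Set H))
    (fC : Conjugation (WithLp 2 (H × H)))
    (hfC : ∀ z, WithLp.equiv 2 (H × H) (fC z)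
      = (C ((WithLp.equiv 2 (H × H)) z).2, C ((WithLp.equiv 2 (H × H)) z).1))
    (fA : WithLp 2 (H × H) →ₗ.[ℂ] WithLp 2 (H × H))
    (hdom : ∀ z, z ∈ fA.domain ↔ ((WithLp.equiv 2 (H × H)) z).1 ∈ (C.conjOp A).domain
        ∧ ((WithLp.equiv 2 (H × H)) z).2 ∈ A.domain)
    (hval : ∀ (z : fA.domain) (h2 : ((WithLp.equiv 2 (H × H)) (z : WithLp 2 (H × H))).2 ∈ A.domain)
        (h1 : C ((WithLp.equiv 2 (H × H)) (z : WithLp 2 (H × H))).1 ∈ A.domain),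
        (WithLp.equiv 2 (H × H)) (fA z)
          = (A ⟨((WithLp.equiv 2 (H × H)) (z : WithLp 2 (H × H))).2, h2⟩,
             C (A ⟨C ((WithLp.equiv 2 (H × H)) (z : WithLp 2 (H × H))).1, h1⟩))) :
    (C.IsCSymmetric A ↔
      ∀ z w : fA.domain, ⟪fA z, (w : WithLp 2 (H × H))⟫_ℂ = ⟪(z : WithLp 2 (H × H)), fA w⟫_ℂ)
    ∧ (C.IsCSelfAdjoint A ↔ fA† = fA)
    ∧ (∀ w, w ∈ (fA†).domain ↔ ((WithLp.equiv 2 (H × H)) w).1 ∈ (A†).domain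
        ∧ ((WithLp.equiv 2 (H × H)) w).2 ∈ (C.conjOp (A†)).domain)
    ∧ (∀ (w : (fA†).domain) (h1 : C ((WithLp.equiv 2 (H × H)) (w : WithLp 2 (H × H))).2 ∈ (A†).domain)
        (h2 : ((WithLp.equiv 2 (H × H)) (w : WithLp 2 (H × H))).1 ∈ (A†).domain),
        (WithLp.equiv 2 (H × H)) (fA† w)
          = (C (A† ⟨C ((WithLp.equiv 2 (H × H)) (w : WithLp 2 (H × H))).2, h1⟩),
             A† ⟨((WithLp.equiv 2 (H × H)) (w : WithLp 2 (H × H))).1, h2⟩)) := by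
  classical
  -- notation shortcuts are avoided; `WithLp.equiv 2 (H × H)` is written in full
  have hCA_dense : Dense ((C.conjOp A).domain : Set H) := by
    have h : ((C.conjOp A).domain : Set H) = C.toFun '' (A.domain : Set H) := rfl
    rw [h]; exact C.dense_image' hA
  have hfA_dense : Dense (fA.domain : Set (WithLp 2 (H × H))) := by
    have h1 : Dense (((C.conjOp A).domain : Set H) ×ˢ (A.domain : Set H)) := hCA_dense.prod hA
    rw [dense_iff_closure_eq] at h1 ⊢
    apply Set.eq_univ_of_univ_subset
    have hsub : (WithLp.equiv 2 (H × H)).symm ''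
        (((C.conjOp A).domain : Set H) ×ˢ (A.domain : Set H))
        ⊆ (fA.domain : Set (WithLp 2 (H × H))) := by
      rintro z ⟨p, ⟨hp1, hp2⟩, rfl⟩
      rw [SetLike.mem_coe, hdom]
      exact ⟨hp1, hp2⟩
    calc (Set.univ : Set (WithLp 2 (H × H)))
        = (WithLp.equiv 2 (H × H)).symm '' Set.univ :=
          (Set.image_univ_of_surjective (Equiv.surjective _)).symm
      _ = (WithLp.equiv 2 (H × H)).symm ''
          closure (((C.conjOp A).domain : Set H) ×ˢ (A.domain : Set H)) := by rw [h1]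
      _ ⊆ closure ((WithLp.equiv 2 (H × H)).symm ''
          (((C.conjOp A).domain : Set H) ×ˢ (A.domain : Set H))) :=
          image_closure_subset_closure_image (WithLp.prod_continuous_toLp _ _ _)
      _ ⊆ closure (fA.domain : Set (WithLp 2 (H × H))) := closure_mono hsub
  -- membership constructors for `fA.domain`
  have memzx : ∀ {x : H}, x ∈ (C.conjOp A).domain →
      (WithLp.equiv 2 (H × H)).symm (x, 0) ∈ fA.domain := by
    intro x hx
    rw [hdom]
    exact ⟨hx, A.domain.zero_mem⟩
  have memzy : ∀ {y : H}, y ∈ A.domain →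
      (WithLp.equiv 2 (H × H)).symm (0, y) ∈ fA.domain := by
    intro y hy
    rw [hdom]
    exact ⟨(C.conjOp A).domain.zero_mem, hy⟩
  -- values of `fA` on those elements
  have hfzx : ∀ (x : H) (hx : x ∈ (C.conjOp A).domain),
      (WithLp.equiv 2 (H × H)) (fA ⟨_, memzx hx⟩) = (0, C.conjOp A ⟨x, hx⟩) := by
    intro x hx
    have h2 : ((WithLp.equiv 2 (H × H))
        ((⟨_, memzx hx⟩ : fA.domain) : WithLp 2 (H × H))).2 ∈ A.domain := A.domain.zero_mem
    have h1 : C ((WithLp.equiv 2 (H × H))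
        ((⟨_, memzx hx⟩ : fA.domain) : WithLp 2 (H × H))).1 ∈ A.domain := C.conj_mem hx
    rw [hval ⟨_, memzx hx⟩ h2 h1]
    refine Prod.ext ?_ ?_
    · show A ⟨(0 : H), h2⟩ = 0
      have : (⟨(0 : H), h2⟩ : A.domain) = 0 := rfl
      rw [this, A.map_zero]
    · rfl
  have hfzy : ∀ (y : H) (hy : y ∈ A.domain),
      (WithLp.equiv 2 (H × H)) (fA ⟨_, memzy hy⟩) = (A ⟨y, hy⟩, 0) := by
    intro y hy
    have h2 : ((WithLp.equiv 2 (H × H))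
        ((⟨_, memzy hy⟩ : fA.domain) : WithLp 2 (H × H))).2 ∈ A.domain := hy
    have h1 : C ((WithLp.equiv 2 (H × H))
        ((⟨_, memzy hy⟩ : fA.domain) : WithLp 2 (H × H))).1 ∈ A.domain := by
      show C (0 : H) ∈ A.domain
      rw [C.map_zero]; exact A.domain.zero_mem
    rw [hval ⟨_, memzy hy⟩ h2 h1]
    refine Prod.ext rfl ?_
    · show C (A ⟨C (0 : H), h1⟩) = 0
      have hC0 : (⟨C (0 : H), h1⟩ : A.domain) = 0 := by
        apply Subtype.ext; exact C.map_zero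
      rw [hC0, A.map_zero, C.map_zero]
  -- the inner product identity defining the adjoint candidate
  have hbwd : ∀ (w : WithLp 2 (H × H))
      (hw1 : ((WithLp.equiv 2 (H × H)) w).1 ∈ (A†).domain)
      (hw2 : C ((WithLp.equiv 2 (H × H)) w).2 ∈ (A†).domain)
      (z : fA.domain),
      ⟪((WithLp.equiv 2 (H × H)).symm
        (C (A† ⟨C ((WithLp.equiv 2 (H × H)) w).2, hw2⟩),
         A† ⟨((WithLp.equiv 2 (H × H)) w).1, hw1⟩) : WithLp 2 (H × H)),
        (z : WithLp 2 (H × H))⟫_ℂ = ⟪w, fA z⟫_ℂ := by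
    intro w hw1 hw2 z
    obtain ⟨hz1, hz2⟩ := (hdom (z : WithLp 2 (H × H))).mp z.2
    have hz1' : C ((WithLp.equiv 2 (H × H)) (z : WithLp 2 (H × H))).1 ∈ A.domain :=
      C.conj_mem hz1
    have hv := hval z hz2 hz1'
    rw [WithLp.prod_inner_apply_fst_snd, WithLp.prod_inner_apply_fst_snd]
    have e1 : ((WithLp.equiv 2 (H × H)).symm
        (C (A† ⟨C ((WithLp.equiv 2 (H × H)) w).2, hw2⟩),
         A† ⟨((WithLp.equiv 2 (H × H)) w).1, hw1⟩) : WithLp 2 (H × H)).fst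
        = C (A† ⟨C ((WithLp.equiv 2 (H × H)) w).2, hw2⟩) := rfl
    have e2 : ((WithLp.equiv 2 (H × H)).symm
        (C (A† ⟨C ((WithLp.equiv 2 (H × H)) w).2, hw2⟩),
         A† ⟨((WithLp.equiv 2 (H × H)) w).1, hw1⟩) : WithLp 2 (H × H)).snd
        = A† ⟨((WithLp.equiv 2 (H × H)) w).1, hw1⟩ := rfl
    have e3 : (fA z).fst = A ⟨((WithLp.equiv 2 (H × H)) (z : WithLp 2 (H × H))).2, hz2⟩ := by
      rw [← WithLp.equiv_fst, hv]
    have e4 : (fA z).snd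
        = C (A ⟨C ((WithLp.equiv 2 (H × H)) (z : WithLp 2 (H × H))).1, hz1'⟩) := by
      rw [← WithLp.equiv_snd, hv]
    have e5 : ((z : WithLp 2 (H × H)).fst : H)
        = ((WithLp.equiv 2 (H × H)) (z : WithLp 2 (H × H))).1 := rfl
    have e6 : ((z : WithLp 2 (H × H)).snd : H)
        = ((WithLp.equiv 2 (H × H)) (z : WithLp 2 (H × H))).2 := rfl
    have e7 : (w.fst : H) = ((WithLp.equiv 2 (H × H)) w).1 := rfl
    have e8 : (w.snd : H) = ((WithLp.equiv 2 (H × H)) w).2 := rfl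
    rw [e1, e2, e3, e4, e5, e6, e7, e8]
    have key1 : ⟪C (A† ⟨C ((WithLp.equiv 2 (H × H)) w).2, hw2⟩),
        ((WithLp.equiv 2 (H × H)) (z : WithLp 2 (H × H))).1⟫_ℂ
        = ⟪((WithLp.equiv 2 (H × H)) w).2,
          C (A ⟨C ((WithLp.equiv 2 (H × H)) (z : WithLp 2 (H × H))).1, hz1'⟩)⟫_ℂ := by
      rw [C.inner_conj_left, C.inner_conj_right]
      have hfa := adjoint_isFormalAdjoint hA (⟨_, hw2⟩ : (A†).domain) (⟨_, hz1'⟩ : A.domain)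
      have hfa2 := congrArg (starRingEnd ℂ) hfa
      rw [inner_conj_symm, inner_conj_symm] at hfa2
      exact hfa2
    have key2 : ⟪(A† ⟨((WithLp.equiv 2 (H × H)) w).1, hw1⟩ : H),
        ((WithLp.equiv 2 (H × H)) (z : WithLp 2 (H × H))).2⟫_ℂ
        = ⟪((WithLp.equiv 2 (H × H)) w).1,
          A ⟨((WithLp.equiv 2 (H × H)) (z : WithLp 2 (H × H))).2, hz2⟩⟫_ℂ :=
      adjoint_isFormalAdjoint hA ⟨_, hw1⟩ ⟨_, hz2⟩
    rw [key1, key2]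
    ring
  -- forward characterization of the adjoint
  have hfwd : ∀ (w : (fA†).domain),
      ∃ (h1 : ((WithLp.equiv 2 (H × H)) (w : WithLp 2 (H × H))).1 ∈ (A†).domain)
        (h2 : C ((WithLp.equiv 2 (H × H)) (w : WithLp 2 (H × H))).2 ∈ (A†).domain),
        (WithLp.equiv 2 (H × H)) (fA† w)
          = (C (A† ⟨C ((WithLp.equiv 2 (H × H)) (w : WithLp 2 (H × H))).2, h2⟩),
             A† ⟨((WithLp.equiv 2 (H × H)) (w : WithLp 2 (H × H))).1, h1⟩) := by
    intro w
    have hform := adjoint_isFormalAdjoint hfA_dense w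
    -- first component of w
    have h1 : ((WithLp.equiv 2 (H × H)) (w : WithLp 2 (H × H))).1 ∈ (A†).domain := by
      apply mem_adjoint_domain_of_exists
      refine ⟨((fA† w) : WithLp 2 (H × H)).snd, fun y => ?_⟩
      have h := hform ⟨_, memzy y.2⟩
      rw [WithLp.prod_inner_apply_fst_snd, WithLp.prod_inner_apply_fst_snd] at h
      have e3 : ((fA ⟨_, memzy y.2⟩ : WithLp 2 (H × H))).fst = A ⟨(y : H), y.2⟩ := by
        rw [← WithLp.equiv_fst, hfzy (y : H) y.2]
      have e4 : ((fA ⟨_, memzy y.2⟩ : WithLp 2 (H × H))).snd = 0 := by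
        rw [← WithLp.equiv_snd, hfzy (y : H) y.2]
      rw [e3, e4, inner_zero_right] at h
      have e5 : ((((WithLp.equiv 2 (H × H)).symm ((0 : H), (y : H))) :
          WithLp 2 (H × H)).fst : H) = 0 := rfl
      have e6 : ((((WithLp.equiv 2 (H × H)).symm ((0 : H), (y : H))) :
          WithLp 2 (H × H)).snd : H) = (y : H) := rfl
      rw [e5, e6, inner_zero_right, zero_add, add_zero] at h
      have hy' : A ⟨(y : H), y.2⟩ = A y := rfl
      rw [hy'] at h
      exact h
    have key1 : ∀ y : A.domain,
        ⟪C ((fA† w : WithLp 2 (H × H)).fst : H), (y : H)⟫_ℂ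
          = ⟪C ((WithLp.equiv 2 (H × H)) (w : WithLp 2 (H × H))).2, A y⟫_ℂ := by
      intro y
      have hx : C (y : H) ∈ (C.conjOp A).domain := C.mem_conjDomain_iff'.mpr (by
        rw [C.invol]; exact y.2)
      have h := hform ⟨_, memzx hx⟩
      rw [WithLp.prod_inner_apply_fst_snd, WithLp.prod_inner_apply_fst_snd] at h
      have e3 : ((fA ⟨_, memzx hx⟩ : WithLp 2 (H × H))).fst = 0 := by
        rw [← WithLp.equiv_fst, hfzx _ hx]
      have e4 : ((fA ⟨_, memzx hx⟩ : WithLp 2 (H × H))).snd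
          = C.conjOp A ⟨C (y : H), hx⟩ := by
        rw [← WithLp.equiv_snd, hfzx _ hx]
      rw [e3, e4, inner_zero_right, zero_add] at h
      have e5 : ((((WithLp.equiv 2 (H × H)).symm ((C (y : H) : H), (0 : H))) :
          WithLp 2 (H × H)).fst : H) = C (y : H) := rfl
      have e6 : ((((WithLp.equiv 2 (H × H)).symm ((C (y : H) : H), (0 : H))) :
          WithLp 2 (H × H)).snd : H) = 0 := rfl
      rw [e5, e6, inner_zero_right, add_zero] at h
      -- h : ⟪(fA† w).fst, C y⟫ = ⟪w.snd, conjOp A ⟨C y, hx⟩⟫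
      have hco : C.conjOp A ⟨C (y : H), hx⟩ = C (A y) := by
        rw [C.conjOp_apply']
        congr 1
        apply congrArg
        apply Subtype.ext
        exact C.invol (y : H)
      rw [hco] at h
      have lhs : ⟪((fA† w : WithLp 2 (H × H)).fst : H), C (y : H)⟫_ℂ
          = ⟪(y : H), C ((fA† w : WithLp 2 (H × H)).fst : H)⟫_ℂ :=
        C.inner_conj_right _ _
      have rhs : ⟪((w : WithLp 2 (H × H)).snd : H), C (A y : H)⟫_ℂ
          = ⟪(A y : H), C ((w : WithLp 2 (H × H)).snd : H)⟫_ℂ :=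
        C.inner_conj_right _ _
      rw [lhs, rhs] at h
      have h2 := congrArg (starRingEnd ℂ) h
      rw [inner_conj_symm, inner_conj_symm] at h2
      exact h2
    have h2 : C ((WithLp.equiv 2 (H × H)) (w : WithLp 2 (H × H))).2 ∈ (A†).domain :=
      mem_adjoint_domain_of_exists _ ⟨C ((fA† w : WithLp 2 (H × H)).fst : H), key1⟩
    refine ⟨h1, h2, ?_⟩
    have hval2 : A† ⟨C ((WithLp.equiv 2 (H × H)) (w : WithLp 2 (H × H))).2, h2⟩
        = C ((fA† w : WithLp 2 (H × H)).fst : H) :=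
      adjoint_apply_eq hA _ key1
    have hval1 : A† ⟨((WithLp.equiv 2 (H × H)) (w : WithLp 2 (H × H))).1, h1⟩
        = ((fA† w : WithLp 2 (H × H)).snd : H) := by
      apply adjoint_apply_eq hA
      intro y
      have h := adjoint_isFormalAdjoint hfA_dense w ⟨_, memzy y.2⟩
      rw [WithLp.prod_inner_apply_fst_snd, WithLp.prod_inner_apply_fst_snd] at h
      have e3 : ((fA ⟨_, memzy y.2⟩ : WithLp 2 (H × H))).fst = A ⟨(y : H), y.2⟩ := by
        rw [← WithLp.equiv_fst, hfzy (y : H) y.2]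
      have e4 : ((fA ⟨_, memzy y.2⟩ : WithLp 2 (H × H))).snd = 0 := by
        rw [← WithLp.equiv_snd, hfzy (y : H) y.2]
      rw [e3, e4, inner_zero_right, add_zero] at h
      have e5 : ((((WithLp.equiv 2 (H × H)).symm ((0 : H), (y : H))) :
          WithLp 2 (H × H)).fst : H) = 0 := rfl
      have e6 : ((((WithLp.equiv 2 (H × H)).symm ((0 : H), (y : H))) :
          WithLp 2 (H × H)).snd : H) = (y : H) := rfl
      rw [e5, e6, inner_zero_right, zero_add] at h
      have hy' : A ⟨(y : H), y.2⟩ = A y := rfl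
      rw [hy'] at h
      exact h
    apply Prod.ext
    · show ((fA† w : WithLp 2 (H × H)).fst : H) = _
      rw [hval2, C.invol]
    · show ((fA† w : WithLp 2 (H × H)).snd : H) = _
      rw [hval1]
  -- the adjoint domain characterization (conjunct 3)
  have hc3 : ∀ w, w ∈ (fA†).domain ↔ ((WithLp.equiv 2 (H × H)) w).1 ∈ (A†).domain
      ∧ ((WithLp.equiv 2 (H × H)) w).2 ∈ (C.conjOp (A†)).domain := by
    intro w
    constructor
    · intro hw
      obtain ⟨h1, h2, _⟩ := hfwd ⟨w, hw⟩
      exact ⟨h1, C.mem_conjDomain_iff'.mpr h2⟩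
    · rintro ⟨hw1, hw2⟩
      apply mem_adjoint_domain_of_exists
      exact ⟨_, hbwd w hw1 (C.conj_mem hw2)⟩
  -- the adjoint value characterization (conjunct 4)
  have hc4 : ∀ (w : (fA†).domain)
      (h1 : C ((WithLp.equiv 2 (H × H)) (w : WithLp 2 (H × H))).2 ∈ (A†).domain)
      (h2 : ((WithLp.equiv 2 (H × H)) (w : WithLp 2 (H × H))).1 ∈ (A†).domain),
      (WithLp.equiv 2 (H × H)) (fA† w)
        = (C (A† ⟨C ((WithLp.equiv 2 (H × H)) (w : WithLp 2 (H × H))).2, h1⟩),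
           A† ⟨((WithLp.equiv 2 (H × H)) (w : WithLp 2 (H × H))).1, h2⟩) := by
    intro w h1 h2
    obtain ⟨h1', h2', hv⟩ := hfwd w
    exact hv
  -- the symmetry characterization (conjunct 1)
  have hc1 : C.IsCSymmetric A ↔
      ∀ z w : fA.domain, ⟪fA z, (w : WithLp 2 (H × H))⟫_ℂ
        = ⟪(z : WithLp 2 (H × H)), fA w⟫_ℂ := by
    constructor
    · intro hsym z w
      obtain ⟨hz1, hz2⟩ := (hdom (z : WithLp 2 (H × H))).mp z.2
      obtain ⟨hw1, hw2⟩ := (hdom (w : WithLp 2 (H × H))).mp w.2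
      have hvz := hval z hz2 (C.conj_mem hz1)
      have hvw := hval w hw2 (C.conj_mem hw1)
      rw [WithLp.prod_inner_apply_fst_snd, WithLp.prod_inner_apply_fst_snd]
      have ez1 : ((fA z : WithLp 2 (H × H)).fst : H)
          = A ⟨((WithLp.equiv 2 (H × H)) (z : WithLp 2 (H × H))).2, hz2⟩ := by
        rw [← WithLp.equiv_fst, hvz]
      have ez2 : ((fA z : WithLp 2 (H × H)).snd : H)
          = C.conjOp A ⟨((WithLp.equiv 2 (H × H)) (z : WithLp 2 (H × H))).1, hz1⟩ := by
        rw [← WithLp.equiv_snd, hvz]; rfl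
      have ew1 : ((fA w : WithLp 2 (H × H)).fst : H)
          = A ⟨((WithLp.equiv 2 (H × H)) (w : WithLp 2 (H × H))).2, hw2⟩ := by
        rw [← WithLp.equiv_fst, hvw]
      have ew2 : ((fA w : WithLp 2 (H × H)).snd : H)
          = C.conjOp A ⟨((WithLp.equiv 2 (H × H)) (w : WithLp 2 (H × H))).1, hw1⟩ := by
        rw [← WithLp.equiv_snd, hvw]; rfl
      rw [ez1, ez2, ew1, ew2]
      -- key fact: ⟪conjOp A x, y⟫ = ⟪x, A y⟫ for x in D(CAC), y in D(A)
      have keyf : ∀ (x : (C.conjOp A).domain) (y : A.domain),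
          ⟪(C.conjOp A x : H), (y : H)⟫_ℂ = ⟪(x : H), A y⟫_ℂ := by
        intro x y
        obtain ⟨x', hx', hvx⟩ := exists_of_le hsym x
        rw [hvx, hx']
        exact adjoint_isFormalAdjoint hA x' y
      have t1 : ⟪(A ⟨((WithLp.equiv 2 (H × H)) (z : WithLp 2 (H × H))).2, hz2⟩ : H),
          ((w : WithLp 2 (H × H)).fst : H)⟫_ℂ
          = ⟪((z : WithLp 2 (H × H)).snd : H),
            (C.conjOp A ⟨((WithLp.equiv 2 (H × H)) (w : WithLp 2 (H × H))).1, hw1⟩ : H)⟫_ℂ := by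
        rw [← inner_conj_symm]
        have := keyf ⟨_, hw1⟩ ⟨_, hz2⟩
        rw [show (((w : WithLp 2 (H × H)).fst : H))
            = ((WithLp.equiv 2 (H × H)) (w : WithLp 2 (H × H))).1 from rfl]
        rw [← this, inner_conj_symm]
        rfl
      have t2 : ⟪(C.conjOp A ⟨((WithLp.equiv 2 (H × H)) (z : WithLp 2 (H × H))).1, hz1⟩ : H),
          ((w : WithLp 2 (H × H)).snd : H)⟫_ℂ
          = ⟪((z : WithLp 2 (H × H)).fst : H),
            (A ⟨((WithLp.equiv 2 (H × H)) (w : WithLp 2 (H × H))).2, hw2⟩ : H)⟫_ℂ := by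
        have := keyf ⟨_, hz1⟩ ⟨_, hw2⟩
        exact this
      rw [t1, t2]
      ring
    · intro hsymm
      have hformal : fA.IsFormalAdjoint fA := fun z w => hsymm z w
      have hle : fA ≤ fA† := hformal.le_adjoint hfA_dense
      constructor
      · intro x hx
        have hz : (WithLp.equiv 2 (H × H)).symm (x, 0) ∈ (fA†).domain := hle.1 (memzx hx)
        exact ((hc3 _).mp hz).1
      · intro x y hxy
        -- x : (C.conjOp A).domain, y : (A†).domain with equal coercions
        have hz : (WithLp.equiv 2 (H × H)).symm ((x : H), 0) ∈ (fA†).domain :=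
          hle.1 (memzx x.2)
        have heq : fA ⟨_, memzx x.2⟩ = fA† ⟨_, hz⟩ := hle.2 rfl
        obtain ⟨h1, h2, hv⟩ := hfwd ⟨_, hz⟩
        have hsnd : ((fA ⟨_, memzx x.2⟩ : WithLp 2 (H × H)).snd : H) = C.conjOp A x := by
          rw [← WithLp.equiv_snd, hfzx (x : H) x.2]
        have hsnd2 : ((fA† (⟨_, hz⟩ : (fA†).domain) : WithLp 2 (H × H)).snd : H)
            = A† ⟨(x : H), h1⟩ := by
          rw [← WithLp.equiv_snd, hv]
          rfl
        have : C.conjOp A x = A† ⟨(x : H), h1⟩ := by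
          rw [← hsnd, ← hsnd2, heq]
        have hxy' : (⟨(x : H), h1⟩ : (A†).domain) = y := Subtype.ext hxy
        rw [this, hxy']
  refine ⟨hc1, ?_, hc3, hc4⟩
  -- conjunct 2 : C-self-adjoint iff fA† = fA
  constructor
  · intro hsa
    have hle1 : C.conjOp A ≤ A† := le_of_eq hsa
    have hle2 : A† ≤ C.conjOp A := le_of_eq hsa.symm
    apply eq_of_le_of_domain_eq
    · constructor
      · intro w hw
        rw [hdom]
        obtain ⟨h1, h2, _⟩ := hfwd ⟨w, hw⟩
        refine ⟨hle2.1 h1, ?_⟩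
        have := hle2.1 h2
        have h3 : C ((WithLp.equiv 2 (H × H)) w).2 ∈ C.conjDomain A.domain := this
        have := C.conj_mem h3
        rwa [C.invol] at this
      · intro w z hwz
        -- w : (fA†).domain, z : fA.domain with equal coercions
        obtain ⟨h1, h2, hv⟩ := hfwd w
        obtain ⟨hz1, hz2⟩ := (hdom (z : WithLp 2 (H × H))).mp z.2
        have hvz := hval z hz2 (C.conj_mem hz1)
        apply (WithLp.equiv 2 (H × H)).injective
        rw [hv, hvz]
        have hw1 : ((WithLp.equiv 2 (H × H)) (w : WithLp 2 (H × H))).1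
            = ((WithLp.equiv 2 (H × H)) (z : WithLp 2 (H × H))).1 := by rw [hwz]
        have hw2 : ((WithLp.equiv 2 (H × H)) (w : WithLp 2 (H × H))).2
            = ((WithLp.equiv 2 (H × H)) (z : WithLp 2 (H × H))).2 := by rw [hwz]
        apply Prod.ext
        · show C (A† ⟨C ((WithLp.equiv 2 (H × H)) (w : WithLp 2 (H × H))).2, h2⟩)
            = A ⟨((WithLp.equiv 2 (H × H)) (z : WithLp 2 (H × H))).2, hz2⟩
          have hm : C ((WithLp.equiv 2 (H × H)) (w : WithLp 2 (H × H))).2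
              ∈ (C.conjOp A).domain := hle2.1 h2
          have he : A† ⟨C ((WithLp.equiv 2 (H × H)) (w : WithLp 2 (H × H))).2, h2⟩
              = C.conjOp A ⟨_, hm⟩ := hle2.2 rfl
          rw [he, C.conjOp_apply']
          have harg : (⟨C (C.toFun ((WithLp.equiv 2 (H × H)) (w : WithLp 2 (H × H))).2),
              C.conj_mem hm⟩ : A.domain)
              = ⟨((WithLp.equiv 2 (H × H)) (z : WithLp 2 (H × H))).2, hz2⟩ := by
            apply Subtype.ext
            show C (C ((WithLp.equiv 2 (H × H)) (w : WithLp 2 (H × H))).2) = _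
            rw [C.invol]
            exact hw2
          rw [harg]
          exact C.invol _
        · show (A† ⟨((WithLp.equiv 2 (H × H)) (w : WithLp 2 (H × H))).1, h1⟩ : H)
            = C (A ⟨C ((WithLp.equiv 2 (H × H)) (z : WithLp 2 (H × H))).1, C.conj_mem hz1⟩)
          have hm : ((WithLp.equiv 2 (H × H)) (w : WithLp 2 (H × H))).1
              ∈ (C.conjOp A).domain := hle2.1 h1
          have he : A† ⟨((WithLp.equiv 2 (H × H)) (w : WithLp 2 (H × H))).1, h1⟩
              = C.conjOp A ⟨_, hm⟩ := hle2.2 rfl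
          rw [he, C.conjOp_apply']
          have harg : (⟨C ((WithLp.equiv 2 (H × H)) (w : WithLp 2 (H × H))).1,
              C.conj_mem hm⟩ : A.domain)
              = ⟨C ((WithLp.equiv 2 (H × H)) (z : WithLp 2 (H × H))).1, C.conj_mem hz1⟩ := by
            apply Subtype.ext
            show C ((WithLp.equiv 2 (H × H)) (w : WithLp 2 (H × H))).1
              = C ((WithLp.equiv 2 (H × H)) (z : WithLp 2 (H × H))).1
            rw [hw1]
          rw [harg]
    · apply le_antisymm
      · intro w hw
        rw [hdom]
        obtain ⟨h1, h2, _⟩ := hfwd ⟨w, hw⟩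
        refine ⟨hle2.1 h1, ?_⟩
        have h3 : C ((WithLp.equiv 2 (H × H)) w).2 ∈ C.conjDomain A.domain := hle2.1 h2
        have := C.conj_mem h3
        rwa [C.invol] at this
      · intro w hw
        obtain ⟨hw1, hw2⟩ := (hdom w).mp hw
        rw [hc3]
        refine ⟨hle1.1 hw1, ?_⟩
        exact C.mem_conjDomain_iff'.mpr
          (hle1.1 (C.mem_conjDomain_iff'.mpr (by rw [C.invol]; exact hw2)))
  · intro hsa
    -- from fA† = fA, derive symmetry, then C-symmetric, then equality of domains
    have hle : fA ≤ fA† := le_of_eq hsa.symm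
    have hsymm : ∀ z w : fA.domain, ⟪fA z, (w : WithLp 2 (H × H))⟫_ℂ
        = ⟪(z : WithLp 2 (H × H)), fA w⟫_ℂ := by
      intro z w
      obtain ⟨z', hz', hvz⟩ := exists_of_le hle z
      rw [hvz, hz']
      exact adjoint_isFormalAdjoint hfA_dense z' w
    have hCsym : C.IsCSymmetric A := hc1.mpr hsymm
    apply eq_of_le_of_domain_eq hCsym
    apply le_antisymm hCsym.1
    intro x hx
    have hw : (WithLp.equiv 2 (H × H)).symm (x, 0) ∈ (fA†).domain := by
      rw [hc3]
      constructor
      · exact hx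
      · show (0 : H) ∈ (C.conjOp (A†)).domain
        exact ((C.conjOp (A†)).domain).zero_mem
    rw [hsa] at hw
    exact ((hdom _).mp hw).1
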